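/- Assume m ≥ 2. Then for every z ∈ ℂ, D(z) = Σ_{j=1}^{n} m·φ_j·λ_j·z^{m−2}·∏_{ℓ≠j}(z^m − λ_ℓ^m). -/

import Mathlib

open Matrix BigOperators

noncomputable section

/-- The block matrix `L̃` with diagonal blocks `Λ = diag(λ₁,…,λₙ)` at positions `(h, h+1)`:
its entry in row `(h,j)` and column `(i,k)` is `λⱼ` if `k = j` and `i = h + 1` in `ℤ/mℤ`,
and `0` otherwise. -/
def Ltilde (m n : ℕ) (lam : Fin n → ℂ) :
    Matrix (ZMod m × Fin n) (ZMod m × Fin n) ℂ :=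
  Matrix.of fun p q => if q.2 = p.2 ∧ q.1 = p.1 + 1 then lam p.2 else 0

/-- `|g| = g₀ + g₁ + ⋯ + g_{m-1}`. -/
def gAbs (m : ℕ) (g : ZMod m → ℂ) : ℂ :=
  ∑ s ∈ Finset.range m, g (s : ZMod m)

/-- `cᵢ = Σ_{r=0}^{i} g_r − Σ_{s=0}^{m−1} ((m−s)/m)·g_s`, the index `i` read modulo `m`. -/
def cConst (m : ℕ) (g : ZMod m → ℂ) (i : ZMod m) : ℂ :=
  (∑ r ∈ Finset.range (i.val + 1), g (r : ZMod m)) -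
    ∑ s ∈ Finset.range m, (((m : ℂ) - (s : ℂ)) / (m : ℂ)) * g (s : ZMod m)

/-- The spin matrix `Q̃` built from `V i = ṽᵢ·w̃ᵢ`: its entry in row `(h,j)` and column `(i,k)`
vanishes unless `h = i + 1` in `ℤ/mℤ`, in which case (taking the representative
`i ∈ {0,…,m−1}`) it equals
`φⱼ + (1/λⱼ)·(cᵢ + Σ_{r=0}^{i}(V_r)ⱼⱼ − Σ_{s=0}^{m−1}((m−s)/m)·(V_s)ⱼⱼ)` if `k = j`, and
`−Σ_{h′=0}^{m−1}(V_{i−h′})ⱼₖ·λⱼ^{m−h′−1}·λₖ^{h′}/(λⱼ^m − λₖ^m)` if `k ≠ j`. -/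
def QtildeS (m n : ℕ) (g : ZMod m → ℂ) (lam phi : Fin n → ℂ)
    (V : ZMod m → Matrix (Fin n) (Fin n) ℂ) :
    Matrix (ZMod m × Fin n) (ZMod m × Fin n) ℂ :=
  Matrix.of fun p q =>
    if p.1 = q.1 + 1 then
      if q.2 = p.2 then
        phi p.2 + (1 / lam p.2) *
          (cConst m g q.1 + (∑ r ∈ Finset.range (q.1.val + 1), (V (r : ZMod m)) p.2 p.2) -
            ∑ s ∈ Finset.range m, (((m : ℂ) - (s : ℂ)) / (m : ℂ)) * (V (s : ZMod m)) p.2 p.2)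
      else
        -∑ h' ∈ Finset.range m,
          (V (q.1 - (h' : ZMod m))) p.2 q.2 * lam p.2 ^ (m - h' - 1) * lam q.2 ^ h' /
            (lam p.2 ^ m - lam q.2 ^ m)
    else 0

/-- `A(z) = det(z·1 − L̃)`. -/
def Afun (m n : ℕ) [NeZero m] (lam : Fin n → ℂ) (z : ℂ) : ℂ :=
  (z • (1 : Matrix (ZMod m × Fin n) (ZMod m × Fin n) ℂ) - Ltilde m n lam).det

/-- `D(z) = tr(Q̃ · adj(z·1 − L̃))` (spin case). -/
def DfunS (m n : ℕ) [NeZero m] (g : ZMod m → ℂ) (lam phi : Fin n → ℂ)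
    (V : ZMod m → Matrix (Fin n) (Fin n) ℂ) (z : ℂ) : ℂ :=
  Matrix.trace (QtildeS m n g lam phi V *
    (z • (1 : Matrix (ZMod m × Fin n) (ZMod m × Fin n) ℂ) - Ltilde m n lam).adjugate)

/-- The block-diagonal matrix `B` with entry `(V_h)ⱼₖ` in row `(h,j)` and column `(h,k)`,
and `0` in positions with differing first indices. -/
def Bmat (m n : ℕ) (V : ZMod m → Matrix (Fin n) (Fin n) ℂ) :
    Matrix (ZMod m × Fin n) (ZMod m × Fin n) ℂ :=
  Matrix.of fun p q => if p.1 = q.1 then (V p.1) p.2 q.2 else 0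

/-- `C(z) = tr(Q̃ · adj(z·1 − L̃) · B)` (spin case). -/
def CfunS (m n : ℕ) [NeZero m] (g : ZMod m → ℂ) (lam phi : Fin n → ℂ)
    (V : ZMod m → Matrix (Fin n) (Fin n) ℂ) (z : ℂ) : ℂ :=
  Matrix.trace (QtildeS m n g lam phi V *
    (z • (1 : Matrix (ZMod m × Fin n) (ZMod m × Fin n) ℂ) - Ltilde m n lam).adjugate *
    Bmat m n V)


section SpinAuxA

open Matrix BigOperators Finset Equiv

namespace SpinAux

variable {m : ℕ}

lemma one_ne_zero' (hm : 2 ≤ m) : (1 : ZMod m) ≠ 0 := by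
  haveI : Fact (1 < m) := ⟨hm⟩
  exact one_ne_zero

lemma perm_rigid (hm : 2 ≤ m) (σ : Equiv.Perm (ZMod m))
    (h : ∀ i, σ i = i ∨ σ i = i - 1) :
    σ = 1 ∨ ∀ i, σ i = i - 1 := by
  haveI : NeZero m := ⟨by omega⟩
  by_cases hid : ∃ i0, σ i0 = i0
  · left
    obtain ⟨i0, h0⟩ := hid
    have key : ∀ k : ℕ, σ (i0 + (k : ZMod m)) = i0 + (k : ZMod m) := by
      intro k
      induction k with
      | zero => simpa using h0
      | succ k ih =>
        rcases h (i0 + ((k + 1 : ℕ) : ZMod m)) with h' | h'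
        · exact h'
        · exfalso
          have e : i0 + ((k + 1 : ℕ) : ZMod m) - 1 = i0 + (k : ZMod m) := by
            push_cast; ring
          rw [e] at h'
          have h2 := σ.injective (h'.trans ih.symm)
          push_cast at h2
          exact one_ne_zero' hm (by linear_combination h2)
    refine Equiv.ext fun y => ?_
    have hy : i0 + (((y - i0).val : ℕ) : ZMod m) = y := by
      rw [ZMod.natCast_rightInverse (y - i0)]; ring
    rw [← hy, key]
    rfl
  · right
    push_neg at hid
    intro i
    exact (h i).resolve_left (hid i)

end SpinAux

namespace SpinAux

def rho (m : ℕ) : Equiv.Perm (ZMod m) := Equiv.addRight 1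

lemma rho_pow (m : ℕ) (k : ℕ) : ((rho m) ^ k) 0 = (k : ZMod m) := by
  induction k with
  | zero => simp
  | succ k ih =>
    rw [pow_succ']
    simp only [Equiv.Perm.mul_apply]  -- (ρ * ρ^k) 0 = ρ (ρ^k 0)
    rw [ih]
    simp only [rho, Equiv.coe_addRight]
    push_cast
    ring

lemma isCycle_rho (hm : 2 ≤ m) : (rho m).IsCycle := by
  haveI : NeZero m := ⟨by omega⟩
  refine ⟨0, ?_, ?_⟩
  · simpa [rho] using one_ne_zero' hm
  · intro y _
    refine ⟨(y.val : ℤ), ?_⟩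
    rw [zpow_natCast, rho_pow]
    exact ZMod.natCast_rightInverse y

lemma support_rho (hm : 2 ≤ m) [NeZero m] : (rho m).support = Finset.univ := by
  ext x
  simp only [Equiv.Perm.mem_support, Finset.mem_univ, iff_true, rho,
    Equiv.coe_addRight]
  intro hx
  exact one_ne_zero' hm (by linear_combination hx)

lemma sign_rho (hm : 2 ≤ m) [NeZero m] : Equiv.Perm.sign (rho m) = -(-1) ^ m := by
  rw [(isCycle_rho hm).sign, support_rho hm, Finset.card_univ, ZMod.card]

end SpinAux

namespace SpinAux

lemma val_neg_one' (hm : 2 ≤ m) : (-1 : ZMod m).val = m - 1 := by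
  cases m with
  | zero => omega
  | succ k => simpa using ZMod.val_neg_one k

lemma val_sub_one [NeZero m] {a : ZMod m} (ha : a ≠ 0) : (a - 1).val = a.val - 1 := by
  have h1 : 1 ≤ a.val := Nat.one_le_iff_ne_zero.mpr fun h => ha ((ZMod.val_eq_zero a).mp h)
  have h2 : a - 1 = ((a.val - 1 : ℕ) : ZMod m) := by
    rw [Nat.cast_sub h1, ZMod.natCast_rightInverse a, Nat.cast_one]
  rw [h2, ZMod.val_cast_of_lt]
  have := ZMod.val_lt a
  omega

def Mblk (m : ℕ) (lamj z : ℂ) : Matrix (ZMod m) (ZMod m) ℂ :=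
  Matrix.of fun h i => (if h = i then z else 0) - (if i = h + 1 then lamj else 0)

def Nblk (m : ℕ) (lamj z : ℂ) : Matrix (ZMod m) (ZMod m) ℂ :=
  Matrix.of fun h i => lamj ^ (i - h).val * z ^ (m - 1 - (i - h).val)

lemma det_Mblk (hm : 2 ≤ m) [NeZero m] (lamj z : ℂ) :
    (Mblk m lamj z).det = z ^ m - lamj ^ m := by
  classical
  set σc : Equiv.Perm (ZMod m) := (rho m)⁻¹ with hσc
  have hσc_apply : ∀ i, σc i = i - 1 := by
    intro i
    rw [hσc, Equiv.Perm.inv_eq_iff_eq]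
    simp [rho, sub_add_cancel]
  have h1c : (1 : Equiv.Perm (ZMod m)) ≠ σc := by
    intro h
    have h0 := congrArg (fun σ : Equiv.Perm (ZMod m) => σ 0) h
    simp only [Equiv.Perm.one_apply] at h0
    rw [hσc_apply 0] at h0
    exact one_ne_zero' hm (by linear_combination h0)
  have vanish : ∀ σ ∈ (Finset.univ : Finset (Equiv.Perm (ZMod m))),
      σ ∉ ({1, σc} : Finset (Equiv.Perm (ZMod m))) →
      (Equiv.Perm.sign σ : ℂ) * ∏ i, Mblk m lamj z (σ i) i = 0 := by
    intro σ _ hσ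
    simp only [Finset.mem_insert, Finset.mem_singleton, not_or] at hσ
    by_cases hall : ∀ i, σ i = i ∨ σ i = i - 1
    · rcases perm_rigid hm σ hall with h | h
      · exact absurd h hσ.1
      · exact absurd (Equiv.ext fun i => (h i).trans (hσc_apply i).symm) hσ.2
    · push_neg at hall
      obtain ⟨i, hi1, hi2⟩ := hall
      have hz : Mblk m lamj z (σ i) i = 0 := by
        have c1 : ¬ (σ i = i) := hi1
        have c2 : ¬ (i = σ i + 1) := by
          intro h; exact hi2 (by linear_combination -h)
        simp [Mblk, c1, c2]
      rw [Finset.prod_eq_zero (f := fun j => Mblk m lamj z (σ j) j) (Finset.mem_univ i) hz,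
        mul_zero]
  rw [Matrix.det_apply]
  have hsmul : ∀ σ : Equiv.Perm (ZMod m),
      (Equiv.Perm.sign σ • ∏ i, Mblk m lamj z (σ i) i)
        = (Equiv.Perm.sign σ : ℂ) * ∏ i, Mblk m lamj z (σ i) i := by
    intro σ
    rw [Units.smul_def, zsmul_eq_mul]
  simp only [hsmul]
  rw [← Finset.sum_subset (Finset.subset_univ ({1, σc} : Finset (Equiv.Perm (ZMod m))))
    (fun σ _ h => vanish σ (Finset.mem_univ σ) h)]
  rw [Finset.sum_pair h1c]
  have t1 : ∏ i, Mblk m lamj z ((1 : Equiv.Perm (ZMod m)) i) i = z ^ m := by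
    have : ∀ i : ZMod m, Mblk m lamj z i i = z := by
      intro i
      have c2 : ¬ (i = i + 1) := by
        intro h; exact one_ne_zero' hm (by linear_combination -h)
      simp [Mblk, c2]
    simp only [Equiv.Perm.one_apply, this]
    simp [Finset.prod_const, Finset.card_univ, ZMod.card]
  have t2 : ∏ i, Mblk m lamj z (σc i) i = (-lamj) ^ m := by
    have : ∀ i : ZMod m, Mblk m lamj z (σc i) i = -lamj := by
      intro i
      rw [hσc_apply i]
      have c1 : ¬ (i - 1 = i) := by
        intro h; exact one_ne_zero' hm (by linear_combination -h)
      have c2 : i = i - 1 + 1 := by ring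
      simp [Mblk, c1, ← c2]
    simp only [this]
    simp [Finset.prod_const, Finset.card_univ, ZMod.card]
  have s2 : Equiv.Perm.sign σc = -(-1) ^ m := by
    rw [hσc, Equiv.Perm.sign_inv, sign_rho hm]
  rw [t1, t2, s2, Equiv.Perm.sign_one]
  push_cast
  rw [neg_pow lamj m]
  have hmm1 : ((-1 : ℂ) ^ m) * ((-1 : ℂ) ^ m) = 1 := by
    rw [← mul_pow]; norm_num
  linear_combination (-lamj ^ m) * hmm1

end SpinAux

namespace SpinAux

lemma Mblk_mul_Nblk (hm : 2 ≤ m) [NeZero m] (lamj z : ℂ) :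
    Mblk m lamj z * Nblk m lamj z = (z ^ m - lamj ^ m) • 1 := by
  ext h i
  rw [Matrix.mul_apply]
  have hsum : (∑ x, Mblk m lamj z h x * Nblk m lamj z x i)
      = z * Nblk m lamj z h i - lamj * Nblk m lamj z (h + 1) i := by
    simp only [Mblk, Matrix.of_apply, sub_mul, ite_mul, zero_mul,
      Finset.sum_sub_distrib, Finset.sum_ite_eq, Finset.sum_ite_eq',
      Finset.mem_univ, if_true]
  rw [hsum]
  rw [Matrix.smul_apply, Matrix.one_apply]
  by_cases hhi : h = i
  · subst hhi
    simp only [if_pos rfl, smul_eq_mul, mul_one]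
    have e0 : (h - h).val = 0 := by simp
    have e1 : (h - (h + 1)).val = m - 1 := by
      have : h - (h + 1) = -1 := by ring
      rw [this, val_neg_one' hm]
    simp only [Nblk, Matrix.of_apply, e0, e1, Nat.sub_zero, Nat.sub_self, pow_zero,
      one_mul, mul_one, if_true]
    have z1 : z * z ^ (m - 1) = z ^ m := by
      rw [← pow_succ']
      congr 1
      omega
    have z2 : lamj * lamj ^ (m - 1) = lamj ^ m := by
      rw [← pow_succ']
      congr 1
      omega
    rw [z1, z2]
  · rw [if_neg hhi, smul_zero]
    have hih : i - h ≠ 0 := sub_ne_zero.mpr fun e => hhi e.symm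
    set v := (i - h).val with hv
    have hv0 : v ≠ 0 := by
      simp only [hv, ne_eq, ZMod.val_eq_zero]
      exact hih
    have hvlt : v < m := ZMod.val_lt _
    have e2 : (i - (h + 1)).val = v - 1 := by
      have e3 : i - (h + 1) = (i - h) - 1 := by ring
      rw [e3, val_sub_one hih]
    simp only [Nblk, Matrix.of_apply, ← hv, e2]
    have z1 : z * (lamj ^ v * z ^ (m - 1 - v)) = lamj ^ v * z ^ (m - v) := by
      rw [mul_comm z _, mul_assoc, ← pow_succ]
      congr 2
      omega
    have z2 : lamj * (lamj ^ (v - 1) * z ^ (m - 1 - (v - 1)))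
        = lamj ^ v * z ^ (m - v) := by
      rw [← mul_assoc, ← pow_succ']
      congr 2
      · omega
      · omega
    rw [z1, z2, sub_self]

end SpinAux

end SpinAuxA

namespace SpinAux

variable (m n : ℕ) [NeZero m] (lam : Fin n → ℂ) (z : ℂ)

def Nfull : Matrix (ZMod m × Fin n) (ZMod m × Fin n) ℂ :=
  Matrix.blockDiagonal fun j : Fin n =>
    (∏ l ∈ Finset.univ.erase j, (z ^ m - lam l ^ m)) • Nblk m (lam j) z

lemma M_eq_blockDiagonal :
    z • (1 : Matrix (ZMod m × Fin n) (ZMod m × Fin n) ℂ) - Ltilde m n lam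
      = Matrix.blockDiagonal fun j : Fin n => Mblk m (lam j) z := by
  ext ⟨h, j⟩ ⟨i, k⟩
  simp only [Matrix.sub_apply, Matrix.smul_apply, Matrix.one_apply, Ltilde,
    Matrix.of_apply, Matrix.blockDiagonal_apply, Mblk, Prod.mk.injEq, smul_eq_mul]
  by_cases hjk : j = k
  · subst hjk
    by_cases hhi : h = i <;> simp [hhi]
  · simp [hjk, Ne.symm hjk, fun h : k = j => hjk h.symm]

lemma det_M (hm : 2 ≤ m) :
    (z • (1 : Matrix (ZMod m × Fin n) (ZMod m × Fin n) ℂ) - Ltilde m n lam).det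
      = ∏ j : Fin n, (z ^ m - lam j ^ m) := by
  rw [M_eq_blockDiagonal, Matrix.det_blockDiagonal]
  exact Finset.prod_congr rfl fun j _ => det_Mblk hm (lam j) z

lemma M_mul_Nfull (hm : 2 ≤ m) :
    (z • (1 : Matrix (ZMod m × Fin n) (ZMod m × Fin n) ℂ) - Ltilde m n lam)
        * Nfull m n lam z
      = (∏ j : Fin n, (z ^ m - lam j ^ m)) • 1 := by
  rw [M_eq_blockDiagonal, Nfull, ← Matrix.blockDiagonal_mul]
  have hblk : ∀ j : Fin n,
      Mblk m (lam j) z * ((∏ l ∈ Finset.univ.erase j, (z ^ m - lam l ^ m)) • Nblk m (lam j) z)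
        = (∏ l : Fin n, (z ^ m - lam l ^ m)) • (1 : Matrix (ZMod m) (ZMod m) ℂ) := by
    intro j
    rw [Matrix.mul_smul, Mblk_mul_Nblk hm, smul_smul,
      Finset.prod_erase_mul _ _ (Finset.mem_univ j)]
  have : (fun j : Fin n =>
      Mblk m (lam j) z * ((∏ l ∈ Finset.univ.erase j, (z ^ m - lam l ^ m)) • Nblk m (lam j) z))
      = fun _ : Fin n => (∏ l : Fin n, (z ^ m - lam l ^ m)) • (1 : Matrix (ZMod m) (ZMod m) ℂ) :=
    funext hblk
  rw [this]
  ext ⟨h, j⟩ ⟨i, k⟩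
  simp [Matrix.blockDiagonal_apply, Matrix.one_apply, Prod.ext_iff, and_comm]
  aesop

lemma adj_eq (hm : 2 ≤ m) (hz : (∏ j : Fin n, (z ^ m - lam j ^ m)) ≠ 0) :
    (z • (1 : Matrix (ZMod m × Fin n) (ZMod m × Fin n) ℂ) - Ltilde m n lam).adjugate
      = Nfull m n lam z := by
  set M := z • (1 : Matrix (ZMod m × Fin n) (ZMod m × Fin n) ℂ) - Ltilde m n lam with hM
  set dd := ∏ j : Fin n, (z ^ m - lam j ^ m) with hdd
  have hdet : M.det = dd := det_M m n lam z hm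
  have h1 : M * Nfull m n lam z = dd • 1 := M_mul_Nfull m n lam z hm
  have h2 : M.adjugate * (M * Nfull m n lam z) = M.adjugate * (dd • 1) := by rw [h1]
  rw [← Matrix.mul_assoc, Matrix.adjugate_mul, hdet, Matrix.smul_mul, Matrix.one_mul,
    Matrix.mul_smul, Matrix.mul_one] at h2
  exact (smul_right_injective _ hz h2).symm

end SpinAux



namespace SpinAux

lemma sum_partial (a : ℕ → ℂ) (M : ℕ) :
    ∑ i ∈ Finset.range M, ∑ r ∈ Finset.range (i + 1), a r
      = ∑ r ∈ Finset.range M, ((M - r : ℕ) : ℂ) * a r := by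
  induction M with
  | zero => simp
  | succ M ih =>
    rw [Finset.sum_range_succ, ih,
      Finset.sum_range_succ (f := fun r => ((M + 1 - r : ℕ) : ℂ) * a r)]
    have h1 : ∀ r ∈ Finset.range M,
        ((M + 1 - r : ℕ) : ℂ) * a r = ((M - r : ℕ) : ℂ) * a r + a r := by
      intro r hr
      have hrm := Finset.mem_range.mp hr
      have e : (M + 1 - r : ℕ) = (M - r) + 1 := by omega
      rw [e]
      push_cast
      ring
    rw [Finset.sum_congr rfl h1, Finset.sum_add_distrib, Finset.sum_range_succ a M]
    have e2 : (M + 1 - M : ℕ) = 1 := by omega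
    rw [e2]
    push_cast
    ring

lemma reindex_zmod {m : ℕ} [NeZero m] (F : ℕ → ℂ) :
    ∑ i : ZMod m, F i.val = ∑ t ∈ Finset.range m, F t := by
  refine Finset.sum_nbij' (fun x : ZMod m => x.val) (fun t => (t : ZMod m))
    (fun a _ => Finset.mem_range.mpr (ZMod.val_lt a)) (fun t _ => Finset.mem_univ _)
    (fun a _ => ZMod.natCast_rightInverse a) ?_ (fun a _ => rfl)
  intro t ht
  exact ZMod.val_cast_of_lt (Finset.mem_range.mp ht)

lemma sum_E_zero {m : ℕ} [NeZero m] (a : ℕ → ℂ) :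
    ∑ i : ZMod m, ((∑ r ∈ Finset.range (i.val + 1), a r)
      - ∑ s ∈ Finset.range m, (((m : ℂ) - (s : ℂ)) / (m : ℂ)) * a s) = 0 := by
  have hm0 : (m : ℂ) ≠ 0 := Nat.cast_ne_zero.mpr (NeZero.ne m)
  rw [Finset.sum_sub_distrib,
    reindex_zmod (fun t => ∑ r ∈ Finset.range (t + 1), a r), sum_partial,
    Finset.sum_const, Finset.card_univ, ZMod.card, sub_eq_zero, nsmul_eq_mul,
    Finset.mul_sum]
  refine Finset.sum_congr rfl fun r hr => ?_
  have hrm := Finset.mem_range.mp hr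
  rw [← mul_assoc, mul_div_cancel₀ _ hm0, Nat.cast_sub (le_of_lt hrm)]

lemma trace_QN (m n : ℕ) [NeZero m] (hm : 2 ≤ m) (g : ZMod m → ℂ) (lam phi : Fin n → ℂ)
    (V : ZMod m → Matrix (Fin n) (Fin n) ℂ) (z : ℂ) :
    Matrix.trace (QtildeS m n g lam phi V * Nfull m n lam z)
      = ∑ j : Fin n, (m : ℂ) * phi j * lam j * z ^ (m - 2) *
          ∏ l ∈ Finset.univ.erase j, (z ^ m - lam l ^ m) := by
  haveI : Fact (1 < m) := ⟨hm⟩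
  have step1 : ∀ p : ZMod m × Fin n,
      (QtildeS m n g lam phi V * Nfull m n lam z) p p
        = QtildeS m n g lam phi V p (p.1 - 1, p.2) * Nfull m n lam z (p.1 - 1, p.2) p := by
    intro p
    rw [Matrix.mul_apply]
    refine Finset.sum_eq_single_of_mem (p.1 - 1, p.2) (Finset.mem_univ _) ?_
    intro q _ hq
    by_cases h1 : p.1 = q.1 + 1
    · by_cases h2 : q.2 = p.2
      · refine absurd ?_ hq
        obtain ⟨q1, q2⟩ := q
        simp only [Prod.mk.injEq]
        exact ⟨by linear_combination -h1, h2⟩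
      · have hN0 : Nfull m n lam z q p = 0 := by
          simp [Nfull, Matrix.blockDiagonal_apply, h2]
        rw [hN0, mul_zero]
    · have hQ0 : QtildeS m n g lam phi V p q = 0 := by
        simp [QtildeS, h1]
      rw [hQ0, zero_mul]
  have hQ : ∀ p : ZMod m × Fin n, QtildeS m n g lam phi V p (p.1 - 1, p.2)
      = phi p.2 + (1 / lam p.2) *
          (cConst m g (p.1 - 1)
            + (∑ r ∈ Finset.range ((p.1 - 1).val + 1), V (r : ZMod m) p.2 p.2)
            - ∑ s ∈ Finset.range m,
                (((m : ℂ) - (s : ℂ)) / (m : ℂ)) * V (s : ZMod m) p.2 p.2) := by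
    intro p
    simp [QtildeS]
  have hN : ∀ p : ZMod m × Fin n, Nfull m n lam z (p.1 - 1, p.2) p
      = (∏ l ∈ Finset.univ.erase p.2, (z ^ m - lam l ^ m)) * (lam p.2 * z ^ (m - 2)) := by
    intro p
    simp only [Nfull, Matrix.blockDiagonal_apply, if_pos rfl, Matrix.smul_apply, Nblk,
      Matrix.of_apply, smul_eq_mul]
    have e : p.1 - (p.1 - 1) = (1 : ZMod m) := by ring
    rw [e, ZMod.val_one]
    have e2 : m - 1 - 1 = m - 2 := by omega
    rw [e2]
    simp
  rw [Matrix.trace]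
  simp only [Matrix.diag_apply]
  rw [Finset.sum_congr rfl fun p _ => by rw [step1, hQ, hN]]
  rw [Fintype.sum_prod_type_right]
  refine Finset.sum_congr rfl fun j _ => ?_
  set a : ℕ → ℂ := fun t => g (t : ZMod m) + V (t : ZMod m) j j with ha
  have hE : ∀ i : ZMod m,
      cConst m g i + (∑ r ∈ Finset.range (i.val + 1), V (r : ZMod m) j j)
        - ∑ s ∈ Finset.range m, (((m : ℂ) - (s : ℂ)) / (m : ℂ)) * V (s : ZMod m) j j
      = (∑ r ∈ Finset.range (i.val + 1), a r)
        - ∑ s ∈ Finset.range m, (((m : ℂ) - (s : ℂ)) / (m : ℂ)) * a s := by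
    intro i
    have hsplit1 : ∑ r ∈ Finset.range (i.val + 1), a r
        = (∑ r ∈ Finset.range (i.val + 1), g (r : ZMod m))
          + ∑ r ∈ Finset.range (i.val + 1), V (r : ZMod m) j j := by
      rw [← Finset.sum_add_distrib]
    have hsplit2 : ∑ s ∈ Finset.range m, (((m : ℂ) - (s : ℂ)) / (m : ℂ)) * a s
        = (∑ s ∈ Finset.range m, (((m : ℂ) - (s : ℂ)) / (m : ℂ)) * g (s : ZMod m))
          + ∑ s ∈ Finset.range m, (((m : ℂ) - (s : ℂ)) / (m : ℂ)) * V (s : ZMod m) j j := by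
      rw [← Finset.sum_add_distrib]
      exact Finset.sum_congr rfl fun s _ => mul_add _ _ _
    rw [hsplit1, hsplit2, cConst]
    ring
  have hsum0 : ∑ h : ZMod m,
      ((∑ r ∈ Finset.range ((h - 1).val + 1), a r)
        - ∑ s ∈ Finset.range m, (((m : ℂ) - (s : ℂ)) / (m : ℂ)) * a s) = 0 := by
    have hcomp := Equiv.sum_comp (Equiv.subRight (1 : ZMod m))
      (fun i : ZMod m => (∑ r ∈ Finset.range (i.val + 1), a r)
        - ∑ s ∈ Finset.range m, (((m : ℂ) - (s : ℂ)) / (m : ℂ)) * a s)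
    simp only [Equiv.subRight_apply] at hcomp
    rw [hcomp, sum_E_zero a]
  rw [Finset.sum_congr rfl fun h _ => by rw [hE (h - 1)]]
  dsimp only
  rw [← Finset.sum_mul, Finset.sum_add_distrib, Finset.sum_const, Finset.card_univ,
    ZMod.card, ← Finset.mul_sum, hsum0, mul_zero, add_zero, nsmul_eq_mul]
  ring

end SpinAux


/-- Spin case, `m ≥ 2`:
`D(z) = Σ_{j=1}^{n} m·φⱼ·λⱼ·z^{m−2}·∏_{ℓ≠j}(z^m − λ_ℓ^m)`. -/
theorem spin_Dfun_formula (m n d : ℕ) [NeZero m] (hm : 2 ≤ m) (hn : 0 < n) (hd : 0 < d)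
    (lam phi : Fin n → ℂ) (g : ZMod m → ℂ)
    (hlam : ∀ j, lam j ≠ 0)
    (hsep : ∀ j k : Fin n, j ≠ k → lam j ^ m ≠ lam k ^ m)
    (vt : ZMod m → Matrix (Fin n) (Fin d) ℂ) (wt : ZMod m → Matrix (Fin d) (Fin n) ℂ)
    (hV : ∀ j : Fin n, ∑ i : ZMod m, (vt i * wt i) j j = gAbs m g) (z : ℂ) :
    DfunS m n g lam phi (fun i => vt i * wt i) z =
      ∑ j : Fin n, (m : ℂ) * phi j * lam j * z ^ (m - 2) *
        ∏ l ∈ Finset.univ.erase j, (z ^ m - lam l ^ m) := by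
  haveI : Fact (1 < m) := ⟨hm⟩
  set V : ZMod m → Matrix (Fin n) (Fin n) ℂ := fun i => vt i * wt i with hVdef
  have key : ∀ w : ℂ, (∏ j : Fin n, (w ^ m - lam j ^ m)) ≠ 0 →
      DfunS m n g lam phi V w
        = ∑ j : Fin n, (m : ℂ) * phi j * lam j * w ^ (m - 2) *
            ∏ l ∈ Finset.univ.erase j, (w ^ m - lam l ^ m) := by
    intro w hw
    rw [DfunS, SpinAux.adj_eq m n lam w hm hw, SpinAux.trace_QN m n hm g lam phi V w]
  set P : Polynomial ℂ := ∏ j : Fin n, (Polynomial.X ^ m - Polynomial.C (lam j ^ m)) with hPdef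
  have hPmonic : P.Monic := Polynomial.monic_prod_of_monic _ _ fun j _ =>
    Polynomial.monic_X_pow_sub_C _ (by omega)
  have hP0 : P ≠ 0 := hPmonic.ne_zero
  have hroots : {w : ℂ | P.IsRoot w}.Finite := Polynomial.finite_setOf_isRoot hP0
  have hdense : Dense {w : ℂ | P.IsRoot w}ᶜ := Set.Countable.dense_compl ℂ hroots.countable
  have heval : ∀ w : ℂ, P.eval w = ∏ j : Fin n, (w ^ m - lam j ^ m) := by
    intro w
    rw [hPdef, Polynomial.eval_prod]
    exact Finset.prod_congr rfl fun j _ => by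
      rw [Polynomial.eval_sub, Polynomial.eval_pow, Polynomial.eval_X, Polynomial.eval_C]
  have hc1 : Continuous fun w : ℂ => DfunS m n g lam phi V w := by
    unfold DfunS
    refine Continuous.matrix_trace ?_
    refine Continuous.matrix_mul continuous_const ?_
    refine Continuous.matrix_adjugate ?_
    refine continuous_matrix fun i j => ?_
    simp only [Matrix.sub_apply, Matrix.smul_apply, smul_eq_mul]
    exact (continuous_id.mul continuous_const).sub continuous_const
  have hc2 : Continuous fun w : ℂ => ∑ j : Fin n, (m : ℂ) * phi j * lam j * w ^ (m - 2) *
      ∏ l ∈ Finset.univ.erase j, (w ^ m - lam l ^ m) := by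
    refine continuous_finset_sum _ fun j _ => Continuous.mul ?_ ?_
    · exact continuous_const.mul (continuous_pow _)
    · exact continuous_finset_prod _ fun l _ => (continuous_pow m).sub continuous_const
  have heq : (fun w : ℂ => DfunS m n g lam phi V w)
      = fun w : ℂ => ∑ j : Fin n, (m : ℂ) * phi j * lam j * w ^ (m - 2) *
          ∏ l ∈ Finset.univ.erase j, (w ^ m - lam l ^ m) := by
    refine Continuous.ext_on hdense hc1 hc2 ?_
    intro w hw
    refine key w fun h0 => ?_
    exact hw (by simpa [Set.mem_setOf_eq, Polynomial.IsRoot, heval w] using h0)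
  exact congrFun heq z
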